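/- Let γ ≥ 1, let n ≥ 1 be an integer, let λ > 0, and set x₀ := (λ/(nπ)²)^{1/(2γ)}. Let 0 < a < b ≤ 1 with x₀ ≤ a. Let v : [−1,1] → ℝ be twice continuously differentiable, even, nonnegative, with v(1) = 0, ∫_{−1}^1 v(x)² dx = 1, and −v″(x) + ((nπ)² |x|^{2γ} − λ) v(x) = 0 for all x ∈ (−1,1). Let W : [x₀,1] → ℝ be twice continuously differentiable with −W″(x) + ((nπ)² x^{2γ} − λ) W(x) ≥ 0 for all x ∈ (x₀,1), W(1) ≥ 0, and W′(x₀) < −√(x₀) · λ. Then ∫_a^b v(x)² dx ≤ ∫_a^b W(x)² dx. -/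

import Mathlib

open MeasureTheory Set

set_option maxHeartbeats 1000000 in
/-- Comparison lemma: the normalized nonnegative even first eigenfunction `v` of
`-v'' + (nπ)² |x|^(2γ) v = λ v` is dominated on `(a,b)` by any supersolution `W`
on `[x₀,1]` with `W(1) ≥ 0` and `W'(x₀) < -√x₀ · λ`, where
`x₀ = (λ/(nπ)²)^(1/(2γ))`. -/
theorem eigenfunction_comparison
    (γ : ℝ) (hγ : 1 ≤ γ) (n : ℕ) (hn : 1 ≤ n) (lam : ℝ) (hlam : 0 < lam)
    (x₀ : ℝ) (hx₀ : x₀ = (lam / ((n : ℝ) * Real.pi) ^ 2) ^ (1 / (2 * γ)))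
    (a b : ℝ) (ha : 0 < a) (hab : a < b) (hb : b ≤ 1) (hx₀a : x₀ ≤ a)
    (v v' v'' : ℝ → ℝ)
    (hv1 : ∀ x ∈ Set.Icc (-1 : ℝ) 1, HasDerivWithinAt v (v' x) (Set.Icc (-1 : ℝ) 1) x)
    (hv2 : ∀ x ∈ Set.Icc (-1 : ℝ) 1, HasDerivWithinAt v' (v'' x) (Set.Icc (-1 : ℝ) 1) x)
    (hv3 : ContinuousOn v'' (Set.Icc (-1 : ℝ) 1))
    (heven : ∀ x ∈ Set.Icc (-1 : ℝ) 1, v (-x) = v x)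
    (hpos : ∀ x ∈ Set.Icc (-1 : ℝ) 1, 0 ≤ v x)
    (hbd : v 1 = 0)
    (hnorm : ∫ x in Set.Ioo (-1 : ℝ) 1, (v x) ^ 2 = 1)
    (hode : ∀ x ∈ Set.Ioo (-1 : ℝ) 1,
      -v'' x + (((n : ℝ) * Real.pi) ^ 2 * |x| ^ (2 * γ) - lam) * v x = 0)
    (W W' W'' : ℝ → ℝ)
    (hW1 : ∀ x ∈ Set.Icc x₀ 1, HasDerivWithinAt W (W' x) (Set.Icc x₀ 1) x)
    (hW2 : ∀ x ∈ Set.Icc x₀ 1, HasDerivWithinAt W' (W'' x) (Set.Icc x₀ 1) x)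
    (hW3 : ContinuousOn W'' (Set.Icc x₀ 1))
    (hWsuper : ∀ x ∈ Set.Ioo x₀ 1,
      0 ≤ -W'' x + (((n : ℝ) * Real.pi) ^ 2 * x ^ (2 * γ) - lam) * W x)
    (hW1pos : 0 ≤ W 1)
    (hW'x₀ : W' x₀ < -Real.sqrt x₀ * lam) :
    (∫ x in Set.Ioo a b, (v x) ^ 2) ≤ ∫ x in Set.Ioo a b, (W x) ^ 2 := by
  have hπ : (0:ℝ) < (n : ℝ) * Real.pi := by
    have : (0:ℝ) < (n:ℝ) := by exact_mod_cast hn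
    exact mul_pos this Real.pi_pos
  have hbase : 0 < lam / ((n : ℝ) * Real.pi) ^ 2 := div_pos hlam (by positivity)
  have hγ2 : (0:ℝ) < 2 * γ := by linarith
  have hx₀pos : 0 < x₀ := by rw [hx₀]; exact Real.rpow_pos_of_pos hbase _
  have hx₀lt1 : x₀ < 1 := lt_of_le_of_lt hx₀a (lt_of_lt_of_le hab hb)
  have hx₀pow : x₀ ^ (2*γ) = lam / ((n : ℝ) * Real.pi) ^ 2 := by
    have hexp : (1/(2*γ)) * (2*γ) = 1 := by field_simp
    rw [hx₀, ← Real.rpow_mul hbase.le, hexp, Real.rpow_one]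
  -- q nonneg / pos
  have hqnonneg : ∀ x : ℝ, x₀ ≤ x → lam ≤ ((n : ℝ) * Real.pi) ^ 2 * x ^ (2*γ) := by
    intro x hx
    have h1 : x₀ ^ (2*γ) ≤ x ^ (2*γ) := Real.rpow_le_rpow hx₀pos.le hx hγ2.le
    rw [hx₀pow] at h1
    have h2 : ((n : ℝ) * Real.pi) ^ 2 * (lam / ((n : ℝ) * Real.pi) ^ 2)
        ≤ ((n : ℝ) * Real.pi) ^ 2 * x ^ (2*γ) := by
      exact mul_le_mul_of_nonneg_left h1 (by positivity)
    rwa [mul_div_cancel₀ _ (by positivity : ((n : ℝ) * Real.pi) ^ 2 ≠ 0)] at h2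
  have hqpos : ∀ x : ℝ, x₀ < x → lam < ((n : ℝ) * Real.pi) ^ 2 * x ^ (2*γ) := by
    intro x hx
    have h1 : x₀ ^ (2*γ) < x ^ (2*γ) := Real.rpow_lt_rpow hx₀pos.le hx hγ2
    rw [hx₀pow] at h1
    have h2 : ((n : ℝ) * Real.pi) ^ 2 * (lam / ((n : ℝ) * Real.pi) ^ 2)
        < ((n : ℝ) * Real.pi) ^ 2 * x ^ (2*γ) := by
      exact mul_lt_mul_of_pos_left h1 (by positivity)
    rwa [mul_div_cancel₀ _ (by positivity : ((n : ℝ) * Real.pi) ^ 2 ≠ 0)] at h2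
  -- continuity
  have hvcont : ContinuousOn v (Set.Icc (-1:ℝ) 1) := fun x hx => (hv1 x hx).continuousWithinAt
  have hv'cont : ContinuousOn v' (Set.Icc (-1:ℝ) 1) := fun x hx => (hv2 x hx).continuousWithinAt
  have hWcont : ContinuousOn W (Set.Icc x₀ 1) := fun x hx => (hW1 x hx).continuousWithinAt
  have hW'cont : ContinuousOn W' (Set.Icc x₀ 1) := fun x hx => (hW2 x hx).continuousWithinAt
  -- v' 0 = 0
  have h0mem : (0:ℝ) ∈ Set.Icc (-1:ℝ) 1 := by norm_num
  have hv'0 : v' 0 = 0 := by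
    have hmaps : Set.MapsTo (fun y : ℝ => -y) (Set.Icc (-1:ℝ) 1) (Set.Icc (-1:ℝ) 1) := by
      intro y hy; simp only [Set.mem_Icc] at *; constructor <;> linarith [hy.1, hy.2]
    have hcomp : HasDerivWithinAt (fun y => v (-y)) (v' (-(0:ℝ)) * (-1)) (Set.Icc (-1:ℝ) 1) 0 := by
      exact HasDerivWithinAt.comp 0 (hv1 (-(0:ℝ)) (by norm_num))
        ((hasDerivAt_neg (0:ℝ)).hasDerivWithinAt) hmaps
    have hcomp' : HasDerivWithinAt v (v' (-(0:ℝ)) * (-1)) (Set.Icc (-1:ℝ) 1) 0 := by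
      refine hcomp.congr (fun y hy => (heven y hy).symm) ?_
      rw [neg_zero]
    have hud : UniqueDiffWithinAt ℝ (Set.Icc (-1:ℝ) 1) 0 :=
      uniqueDiffOn_Icc (by norm_num : (-1:ℝ) < 1) 0 h0mem
    have e1 := hcomp'.derivWithin hud
    have e2 := (hv1 0 h0mem).derivWithin hud
    rw [neg_zero] at e1
    have : v' 0 = v' 0 * (-1) := by rw [← e1, ← e2]
    linarith
  -- FTC bound on v' x₀
  have hsub : Set.Icc (0:ℝ) x₀ ⊆ Set.Ioo (-1:ℝ) 1 := by
    intro x hx; exact ⟨by linarith [hx.1], lt_of_le_of_lt hx.2 hx₀lt1⟩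
  have hsub' : Set.Icc (0:ℝ) x₀ ⊆ Set.Icc (-1:ℝ) 1 :=
    hsub.trans Set.Ioo_subset_Icc_self
  have hDA : ∀ x ∈ Set.uIcc (0:ℝ) x₀, HasDerivAt v' (v'' x) x := by
    intro x hx
    rw [Set.uIcc_of_le hx₀pos.le] at hx
    have hxo := hsub hx
    exact (hv2 x (hsub' hx)).hasDerivAt (Icc_mem_nhds hxo.1 hxo.2)
  have hintv'' : IntervalIntegrable v'' volume 0 x₀ := by
    apply ContinuousOn.intervalIntegrable
    rw [Set.uIcc_of_le hx₀pos.le]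
    exact hv3.mono hsub'
  have hFTC : ∫ t in (0:ℝ)..x₀, v'' t = v' x₀ - v' 0 :=
    intervalIntegral.integral_eq_sub_of_hasDerivAt hDA hintv''
  have hv''ge : ∀ x ∈ Set.Icc (0:ℝ) x₀, -lam * v x ≤ v'' x := by
    intro x hx
    have hx' := hsub hx
    have h1 := hode x hx'
    have h2 : 0 ≤ ((n : ℝ) * Real.pi) ^ 2 * |x| ^ (2*γ) * v x := by
      have := hpos x (Set.Ioo_subset_Icc_self hx')
      positivity
    nlinarith
  have hintlow : IntervalIntegrable (fun x => -lam * v x) volume 0 x₀ := by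
    apply ContinuousOn.intervalIntegrable
    rw [Set.uIcc_of_le hx₀pos.le]
    exact continuousOn_const.mul (hvcont.mono hsub')
  have hmono1 : ∫ x in (0:ℝ)..x₀, -lam * v x ≤ ∫ x in (0:ℝ)..x₀, v'' x :=
    intervalIntegral.integral_mono_on hx₀pos.le hintlow hintv'' hv''ge
  set s : ℝ := Real.sqrt x₀ with hs
  have hspos : 0 < s := Real.sqrt_pos.mpr hx₀pos
  have hs2 : s ^ 2 = x₀ := Real.sq_sqrt hx₀pos.le
  -- ∫₀^{x₀} v² ≤ 1
  have hintv2 : IntegrableOn (fun x => (v x)^2) (Set.Ioo (-1:ℝ) 1) volume := by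
    exact ((hvcont.pow 2).integrableOn_Icc).mono_set Set.Ioo_subset_Icc_self
  have hv2le1 : ∫ x in (0:ℝ)..x₀, (v x)^2 ≤ 1 := by
    rw [intervalIntegral.integral_of_le hx₀pos.le, MeasureTheory.integral_Ioc_eq_integral_Ioo]
    rw [← hnorm]
    apply MeasureTheory.setIntegral_mono_set hintv2
    · filter_upwards with x using sq_nonneg _
    · have : Set.Ioo (0:ℝ) x₀ ⊆ Set.Ioo (-1:ℝ) 1 := fun x hx =>
        ⟨by linarith [hx.1], lt_trans hx.2 hx₀lt1⟩
      exact this.eventuallyLE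
  -- ∫₀^{x₀} v ≤ s
  have hintv : IntervalIntegrable v volume 0 x₀ := by
    apply ContinuousOn.intervalIntegrable
    rw [Set.uIcc_of_le hx₀pos.le]
    exact hvcont.mono hsub'
  have hintv2' : IntervalIntegrable (fun x => s/2 * (v x)^2 + 1/(2*s)) volume 0 x₀ := by
    apply ContinuousOn.intervalIntegrable
    rw [Set.uIcc_of_le hx₀pos.le]
    exact (continuousOn_const.mul ((hvcont.mono hsub').pow 2)).add continuousOn_const
  have hvints : ∫ x in (0:ℝ)..x₀, v x ≤ s := by
    have hptw : ∀ x ∈ Set.Icc (0:ℝ) x₀, v x ≤ s/2 * (v x)^2 + 1/(2*s) := by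
      intro x hx
      have h1 : 0 ≤ (s * v x - 1)^2 := sq_nonneg _
      have h2s : (0:ℝ) < 2*s := by linarith
      have hexp : (2*s) * (s/2 * (v x)^2 + 1/(2*s)) = s^2*(v x)^2 + 1 := by
        field_simp
      have h3 : (2*s) * (v x) ≤ s^2*(v x)^2 + 1 := by nlinarith
      exact (mul_le_mul_iff_right₀ h2s).mp (by rw [hexp]; exact h3)
    have h3 := intervalIntegral.integral_mono_on hx₀pos.le hintv hintv2' hptw
    have hi1 : IntervalIntegrable (fun x => s/2 * (v x)^2) volume 0 x₀ := by
      apply ContinuousOn.intervalIntegrable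
      rw [Set.uIcc_of_le hx₀pos.le]
      exact continuousOn_const.mul ((hvcont.mono hsub').pow 2)
    have h4 : ∫ x in (0:ℝ)..x₀, (s/2 * (v x)^2 + 1/(2*s))
        = s/2 * (∫ x in (0:ℝ)..x₀, (v x)^2) + (x₀ - 0) * (1/(2*s)) := by
      rw [intervalIntegral.integral_add hi1 intervalIntegrable_const,
        intervalIntegral.integral_const_mul, intervalIntegral.integral_const,
        smul_eq_mul]
    have h5 : s/2 * (∫ x in (0:ℝ)..x₀, (v x)^2) ≤ s/2 * 1 :=
      mul_le_mul_of_nonneg_left hv2le1 (by positivity)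
    have h6 : s/2 * 1 + (x₀ - 0) * (1/(2*s)) = s := by
      rw [← hs2]; field_simp; ring
    linarith [h3, h4 ▸ h3, h5, h6.le]
  have hv'x₀ : -s * lam ≤ v' x₀ := by
    have h1 : ∫ x in (0:ℝ)..x₀, -lam * v x = -lam * ∫ x in (0:ℝ)..x₀, v x := by
      exact intervalIntegral.integral_const_mul _ _
    have h2 : -lam * ∫ x in (0:ℝ)..x₀, v x ≥ -lam * s := by
      apply mul_le_mul_of_nonpos_left hvints (by linarith)
    rw [hv'0] at hFTC
    nlinarith [hmono1]
  -- maximum principle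
  set u : ℝ → ℝ := fun x => W x - v x with hu
  have hIccsub : Set.Icc x₀ 1 ⊆ Set.Icc (-1:ℝ) 1 := by
    intro x hx; exact ⟨by linarith [hx.1], hx.2⟩
  have hucont : ContinuousOn u (Set.Icc x₀ 1) := hWcont.sub (hvcont.mono hIccsub)
  have huDA : ∀ x ∈ Set.Ioo x₀ 1, HasDerivAt u (W' x - v' x) x := by
    intro x hx
    have h1 : HasDerivAt W (W' x) x :=
      (hW1 x ⟨hx.1.le, hx.2.le⟩).hasDerivAt (Icc_mem_nhds hx.1 hx.2)
    have h2 : HasDerivAt v (v' x) x :=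
      (hv1 x (hIccsub ⟨hx.1.le, hx.2.le⟩)).hasDerivAt
        (Icc_mem_nhds (by linarith [hx.1]) hx.2)
    exact h1.sub h2
  have hu'DA : ∀ x ∈ Set.Ioo x₀ 1, HasDerivAt (fun x => W' x - v' x) (W'' x - v'' x) x := by
    intro x hx
    have h1 : HasDerivAt W' (W'' x) x :=
      (hW2 x ⟨hx.1.le, hx.2.le⟩).hasDerivAt (Icc_mem_nhds hx.1 hx.2)
    have h2 : HasDerivAt v' (v'' x) x :=
      (hv2 x (hIccsub ⟨hx.1.le, hx.2.le⟩)).hasDerivAt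
        (Icc_mem_nhds (by linarith [hx.1]) hx.2)
    exact h1.sub h2
  -- u'' ≤ q u on Ioo x₀ 1
  have hu''le : ∀ x ∈ Set.Ioo x₀ 1,
      W'' x - v'' x ≤ (((n : ℝ) * Real.pi) ^ 2 * x ^ (2*γ) - lam) * u x := by
    intro x hx
    have hxpos : 0 < x := lt_trans hx₀pos hx.1
    have h1 := hWsuper x hx
    have h2 := hode x ⟨by linarith, hx.2⟩
    rw [abs_of_pos hxpos] at h2
    simp only [hu]
    nlinarith
  obtain ⟨m, hmmem, hminOn⟩ := (isCompact_Icc).exists_isMinOn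
    (Set.nonempty_Icc.mpr hx₀lt1.le) hucont
  have hmin := isMinOn_iff.mp hminOn
  have hclaim : 0 ≤ u m := by
    by_contra hneg
    push_neg at hneg
    have hm1 : m ≠ 1 := by
      intro h
      rw [h] at hneg
      simp only [hu, hbd, sub_zero] at hneg
      linarith
    have hmlt1 : m < 1 := lt_of_le_of_ne hmmem.2 hm1
    rcases eq_or_lt_of_le hmmem.1 with hmx₀ | hmx₀
    · -- m = x₀ case
      have hu'cont : ContinuousOn (fun x => W' x - v' x) (Set.Icc x₀ 1) :=
        hW'cont.sub (hv'cont.mono hIccsub)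
      have hu'x₀ : W' x₀ - v' x₀ < 0 := by linarith [hv'x₀, hW'x₀]
      have hct := hu'cont x₀ ⟨le_refl _, hx₀lt1.le⟩
      have hev : {y : ℝ | W' y - v' y < 0} ∈ nhdsWithin x₀ (Set.Icc x₀ 1) :=
        hct (Iio_mem_nhds hu'x₀)
      obtain ⟨U, hUopen, hx₀U, hUsub⟩ := mem_nhdsWithin.mp hev
      obtain ⟨ε, hε, hball⟩ := Metric.isOpen_iff.mp hUopen x₀ hx₀U
      set c := min (x₀ + ε/2) ((x₀+1)/2) with hc
      have hcx₀ : x₀ < c := lt_min (by linarith) (by linarith)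
      have hc1 : c < 1 := lt_of_le_of_lt (min_le_right _ _) (by linarith)
      have hIcccsub : Set.Icc x₀ c ⊆ Set.Icc x₀ 1 :=
        Set.Icc_subset_Icc le_rfl hc1.le
      have hIccc : ∀ y ∈ Set.Icc x₀ c, W' y - v' y < 0 := by
        intro y hy
        have hyU : y ∈ U := by
          apply hball
          rw [Metric.mem_ball, Real.dist_eq]
          have h1 : c ≤ x₀ + ε/2 := min_le_left _ _
          have h2 : |y - x₀| = y - x₀ := abs_of_nonneg (by linarith [hy.1])
          rw [h2]; linarith [hy.2]
        exact hUsub ⟨hyU, hIcccsub hy⟩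
      have hanti : StrictAntiOn u (Set.Icc x₀ c) := by
        apply strictAntiOn_of_deriv_neg (convex_Icc _ _) (hucont.mono hIcccsub)
        intro x hx
        rw [interior_Icc] at hx
        rw [(huDA x ⟨hx.1, lt_trans hx.2 hc1⟩).deriv]
        exact hIccc x ⟨hx.1.le, hx.2.le⟩
      have h7 : u c < u x₀ :=
        hanti (Set.left_mem_Icc.mpr hcx₀.le) (Set.right_mem_Icc.mpr hcx₀.le) hcx₀
      have h8 := hmin c ⟨hcx₀.le, hc1.le⟩
      rw [← hmx₀] at h8
      linarith
    · -- interior case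
      have hu'm : W' m - v' m = 0 := by
        have hloc : IsLocalMin u m := hminOn.isLocalMin (Icc_mem_nhds hmx₀ hmlt1)
        exact hloc.hasDerivAt_eq_zero (huDA m ⟨hmx₀, hmlt1⟩)
      set F : ℝ → ℝ := fun x => (((n : ℝ) * Real.pi) ^ 2 * x ^ (2*γ) - lam) * u x with hF
      have hqcont : ContinuousOn (fun x : ℝ => ((n : ℝ) * Real.pi) ^ 2 * x ^ (2*γ) - lam)
          (Set.Icc x₀ 1) := by
        apply ContinuousOn.sub _ continuousOn_const
        apply continuousOn_const.mul
        intro x hx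
        exact (Real.continuousAt_rpow_const x (2*γ)
          (Or.inl (ne_of_gt (lt_of_lt_of_le hx₀pos hx.1)))).continuousWithinAt
      have hFcont : ContinuousOn F (Set.Icc x₀ 1) := hqcont.mul hucont
      have hFm : F m < 0 := by
        apply mul_neg_of_pos_of_neg _ hneg
        have := hqpos m hmx₀
        linarith
      have hFat : ContinuousAt F m := hFcont.continuousAt (Icc_mem_nhds hmx₀ hmlt1)
      have hev : ∀ᶠ y in nhds m, F y < 0 := hFat (Iio_mem_nhds hFm)
      obtain ⟨ε, hε, hball⟩ := Metric.eventually_nhds_iff.mp hev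
      set d := min (ε/2) ((m - x₀)/2) with hd'
      have hd : 0 < d := lt_min (by linarith) (by linarith)
      have hmd : x₀ < m - d := by
        have : d ≤ (m - x₀)/2 := min_le_right _ _
        linarith
      have hsubd : Set.Icc (m-d) m ⊆ Set.Ioo x₀ 1 := fun y hy =>
        ⟨lt_of_lt_of_le hmd hy.1, lt_of_le_of_lt hy.2 hmlt1⟩
      have hsubd' : Set.Icc (m-d) m ⊆ Set.Icc x₀ 1 :=
        hsubd.trans Set.Ioo_subset_Icc_self
      have hFneg : ∀ y ∈ Set.Icc (m-d) m, F y < 0 := by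
        intro y hy
        apply hball
        rw [Real.dist_eq]
        have h1 : d ≤ ε/2 := min_le_left _ _
        have h2 : |y - m| = -(y - m) := abs_of_nonpos (by linarith [hy.2])
        rw [h2]; linarith [hy.1]
      have hu''neg : ∀ y ∈ Set.Icc (m-d) m, W'' y - v'' y < 0 := fun y hy =>
        lt_of_le_of_lt (hu''le y (hsubd hy)) (hFneg y hy)
      have hanti : StrictAntiOn (fun x => W' x - v' x) (Set.Icc (m-d) m) := by
        apply strictAntiOn_of_deriv_neg (convex_Icc _ _)
          ((hW'cont.sub (hv'cont.mono hIccsub)).mono hsubd')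
        intro x hx
        rw [interior_Icc] at hx
        show deriv (fun x => W' x - v' x) x < 0
        rw [(hu'DA x (hsubd ⟨hx.1.le, hx.2.le⟩)).deriv]
        exact hu''neg x ⟨hx.1.le, hx.2.le⟩
      have hu'pos : ∀ y ∈ Set.Ico (m-d) m, 0 < W' y - v' y := by
        intro y hy
        have h := hanti ⟨hy.1, hy.2.le⟩ (Set.right_mem_Icc.mpr (by linarith)) hy.2
        have h' : W' m - v' m < W' y - v' y := h
        linarith
      have hmono : StrictMonoOn u (Set.Icc (m-d) m) := by
        apply strictMonoOn_of_deriv_pos (convex_Icc _ _) (hucont.mono hsubd')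
        intro x hx
        rw [interior_Icc] at hx
        rw [(huDA x (hsubd ⟨hx.1.le, hx.2.le⟩)).deriv]
        exact hu'pos x ⟨hx.1.le, hx.2⟩
      have h7 : u (m-d) < u m := hmono (Set.left_mem_Icc.mpr (by linarith))
        (Set.right_mem_Icc.mpr (by linarith)) (by linarith)
      have h8 := hmin (m-d) ⟨hmd.le, by linarith [hmlt1]⟩
      linarith
  have hvleW : ∀ x ∈ Set.Icc a b, v x ≤ W x := by
    intro x hx
    have hx' : x ∈ Set.Icc x₀ 1 := ⟨le_trans hx₀a hx.1, le_trans hx.2 hb⟩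
    have := hclaim
    have h2 := hmin x hx'
    simp only [hu] at h2 this ⊢
    linarith
  -- final integral comparison
  have hIccab : Set.Icc a b ⊆ Set.Icc x₀ 1 := fun x hx =>
    ⟨le_trans hx₀a hx.1, le_trans hx.2 hb⟩
  have hIccab' : Set.Icc a b ⊆ Set.Icc (-1:ℝ) 1 := hIccab.trans hIccsub
  apply MeasureTheory.setIntegral_mono_on
  · exact (((hvcont.mono hIccab').pow 2).integrableOn_Icc).mono_set Set.Ioo_subset_Icc_self
  · exact (((hWcont.mono hIccab).pow 2).integrableOn_Icc).mono_set Set.Ioo_subset_Icc_self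
  · exact measurableSet_Ioo
  · intro x hx
    have hx' := Set.Ioo_subset_Icc_self hx
    exact pow_le_pow_left₀ (hpos x (hIccab' hx')) (hvleW x hx') 2
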